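/- Let L be a first-order language, let M be an infinite L-structure, and let A be a finitary group of automorphisms of M. Then the locally finite core M_* is infinite. -/

import Mathlib

open FirstOrder Language

namespace StructAut

variable {L : Language} {M : Type*} [L.Structure M]

/-- The group of `L`-automorphisms of `M`, under composition. -/
instance group (L : Language) (M : Type*) [L.Structure M] : Group (M ≃[L] M) where
  mul f g := f.comp g
  one := FirstOrder.Language.Equiv.refl L M
  inv := FirstOrder.Language.Equiv.symm
  mul_assoc a b c := FirstOrder.Language.Equiv.comp_assoc c b a
  one_mul := FirstOrder.Language.Equiv.refl_comp
  mul_one := FirstOrder.Language.Equiv.comp_refl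
  inv_mul_cancel := FirstOrder.Language.Equiv.symm_comp_self

/-- The orbit of an element `m` of `M` under a group `A` of automorphisms of `M`. -/
def orbit (A : Subgroup (M ≃[L] M)) (m : M) : Set M :=
  {y : M | ∃ α ∈ A, α m = y}

/-- A group `A` of automorphisms of an `L`-structure `M` is *finitary* if it is infinite,
every non-identity element of `A` has a finite set of fixed points, and every nonempty
subset of `M` definable with parameters from `M` that is setwise invariant under some
non-identity element of `A` contains a point with finite `A`-orbit. -/
def IsFinitary (L : Language) (M : Type*) [L.Structure M] (A : Subgroup (M ≃[L] M)) : Prop :=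
  Infinite A ∧
  (∀ α ∈ A, α ≠ 1 → {m : M | α m = m}.Finite) ∧
  ∀ X : Set M, X.Nonempty → (Set.univ : Set M).Definable₁ L X →
    (∃ α ∈ A, α ≠ 1 ∧ (fun m => α m) '' X = X) →
    ∃ x ∈ X, (orbit A x).Finite

/-- The locally finite core `M_*`: the set of elements of `M` with finite `A`-orbit. -/
def core (L : Language) (M : Type*) [L.Structure M] (A : Subgroup (M ≃[L] M)) : Set M :=
  {m : M | (orbit A m).Finite}

end StructAut

open StructAut


section Aux

open FirstOrder Language StructAut

variable {L : Language} {M : Type*} [L.Structure M]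

lemma definable_eq_const (a : M) :
    (Set.univ : Set M).Definable L {x : Fin 1 → M | x 0 = a} := by
  refine ⟨Term.equal (Term.var 0) ((L.con (⟨a, Set.mem_univ a⟩ : (Set.univ : Set M))).term), ?_⟩
  ext x
  simp [Term.equal, Formula.Realize, Term.realize, funMap_eq_coe_constants, coe_con]

lemma definable_finite (s : Set M) (hs : s.Finite) :
    (Set.univ : Set M).Definable L {x : Fin 1 → M | x 0 ∈ s} := by
  have : {x : Fin 1 → M | x 0 ∈ s} = ⋃ a ∈ hs.toFinset, {x : Fin 1 → M | x 0 = a} := by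
    ext x; simp
  rw [this]
  exact Set.definable_biUnion_finset (fun a => definable_eq_const a) _

lemma orbit_apply {A : Subgroup (M ≃[L] M)} {α : M ≃[L] M} (hα : α ∈ A) (m : M) :
    orbit A (α m) = orbit A m := by
  ext y
  constructor
  · rintro ⟨β, hβ, rfl⟩
    exact ⟨β * α, A.mul_mem hβ hα, rfl⟩
  · rintro ⟨β, hβ, rfl⟩
    refine ⟨β * α⁻¹, A.mul_mem hβ (A.inv_mem hα), ?_⟩
    show β (α⁻¹ (α m)) = β m
    congr 1
    have : (α⁻¹ * α) m = (1 : M ≃[L] M) m := by rw [inv_mul_cancel]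
    exact this

lemma core_image {A : Subgroup (M ≃[L] M)} {α : M ≃[L] M} (hα : α ∈ A) :
    (fun m => α m) '' core L M A = core L M A := by
  apply Set.Subset.antisymm
  · rintro y ⟨m, hm, rfl⟩
    show (orbit A (α m)).Finite
    rwa [orbit_apply hα]
  · intro m hm
    refine ⟨α⁻¹ m, ?_, ?_⟩
    · show (orbit A (α⁻¹ m)).Finite
      rwa [orbit_apply (A.inv_mem hα)]
    · show α (α⁻¹ m) = m
      have : (α * α⁻¹) m = (1 : M ≃[L] M) m := by rw [mul_inv_cancel]
      exact this

end Aux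

/-- If `M` is an infinite `L`-structure and `A` is a finitary group of
automorphisms of `M`, then the locally finite core `M_*` is infinite. -/
theorem locallyFiniteCore_infinite
    (L : Language) (M : Type*) [L.Structure M] [Infinite M]
    (A : Subgroup (M ≃[L] M)) (hA : IsFinitary L M A) :
    (core L M A).Infinite := by
  by_contra h
  rw [Set.not_infinite] at h
  obtain ⟨hAinf, _hfix, hdef⟩ := hA
  have hne : ((core L M A)ᶜ).Nonempty := (h.infinite_compl).nonempty
  have hdef1 : (Set.univ : Set M).Definable₁ L (core L M A)ᶜ := by
    have : {x : Fin 1 → M | x 0 ∈ (core L M A)ᶜ} = {x : Fin 1 → M | x 0 ∈ core L M A}ᶜ := by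
      ext x; simp
    unfold Set.Definable₁
    rw [this]
    exact (definable_finite _ h).compl
  have := hAinf
  have : Nontrivial A := Infinite.instNontrivial A
  obtain ⟨α, hα1⟩ := exists_ne (1 : A)
  have hαne : (α : M ≃[L] M) ≠ 1 := by
    rwa [ne_eq, OneMemClass.coe_eq_one]
  have hinv : (fun m => (α : M ≃[L] M) m) '' (core L M A)ᶜ = (core L M A)ᶜ := by
    rw [Set.image_compl_eq (α : M ≃[L] M).bijective, core_image α.2]
  obtain ⟨x, hx, hxfin⟩ := hdef ((core L M A)ᶜ) hne hdef1 ⟨α, α.2, hαne, hinv⟩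
  exact hx hxfin
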